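/- (Ellis theorem) Let G be a group carrying a compact Hausdorff topology such that multiplication is separately continuous (for each a ∈ G, both x ↦ a·x and x ↦ x·a are continuous). Then G is a topological group: multiplication is jointly continuous and inversion is continuous. -/

import Mathlib

open Set Function Topology

open Set Function Topology

/-- Metric-target core lemma (Namioka-type, via Baire category and
uniform-continuity moduli). -/
lemma ellis_metric_core {X Y : Type*} [TopologicalSpace X] [BaireSpace X] [Nonempty X]
    [MetricSpace Y] [CompactSpace Y]
    (E : X → Y → ℝ) (h1 : ∀ x, Continuous (E x)) (h2 : ∀ y, Continuous fun x => E x y)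
    {ε : ℝ} (hε : 0 < ε) :
    ∃ U : Set X, IsOpen U ∧ U.Nonempty ∧
      ∀ x ∈ U, ∀ x' ∈ U, ∀ y, |E x y - E x' y| ≤ ε := by
  set Xn : ℕ → Set X := fun n =>
    ⋂ (y : Y) (y' : Y) (_ : dist y y' ≤ 1 / (n + 1)), {x | |E x y - E x y'| ≤ ε / 8} with hXn
  have hcl : ∀ n, IsClosed (Xn n) := by
    intro n
    refine isClosed_iInter fun y => isClosed_iInter fun y' => isClosed_iInter fun _ => ?_
    exact isClosed_le (((h2 y).sub (h2 y')).abs) continuous_const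
  have hcov : (⋃ n, Xn n) = univ := by
    refine eq_univ_of_forall fun x => ?_
    have huc := CompactSpace.uniformContinuous_of_continuous (h1 x)
    rw [Metric.uniformContinuous_iff] at huc
    obtain ⟨δ, hδ, hδ'⟩ := huc (ε / 8) (by positivity)
    obtain ⟨n, hn⟩ := exists_nat_one_div_lt (K := ℝ) hδ
    refine mem_iUnion.2 ⟨n, ?_⟩
    simp only [hXn, mem_iInter, mem_setOf_eq]
    intro y y' hyy'
    have : dist (E x y) (E x y') < ε / 8 := hδ' (lt_of_le_of_lt hyy' hn)
    rw [Real.dist_eq] at this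
    exact this.le
  obtain ⟨n, x0, hx0⟩ := nonempty_interior_of_iUnion_of_closed hcl hcov
  -- finite net of Y
  have hball : univ ⊆ ⋃ t : Y, Metric.ball t (1 / (n + 1)) := by
    intro y _
    exact mem_iUnion.2 ⟨y, Metric.mem_ball_self (by positivity)⟩
  obtain ⟨s, hs⟩ := isCompact_univ.elim_finite_subcover
    (fun t : Y => Metric.ball t (1 / (n + 1))) (fun t => Metric.isOpen_ball) hball
  refine ⟨interior (Xn n) ∩ ⋂ t ∈ s, {x | |E x t - E x0 t| < ε / 8}, ?_, ⟨x0, hx0, ?_⟩, ?_⟩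
  · exact isOpen_interior.inter (isOpen_biInter_finset fun t _ =>
      isOpen_lt (((h2 t).sub continuous_const).abs) continuous_const)
  · simp only [mem_iInter, mem_setOf_eq]
    intro t _
    simpa using (by positivity : (0:ℝ) < ε / 8)
  · rintro x ⟨hxI, hxT⟩ x' ⟨hx'I, hx'T⟩ y
    obtain ⟨t, hts, hyt⟩ := mem_iUnion₂.1 (hs (mem_univ y))
    have hyt' : dist y t ≤ 1 / (n + 1) := (Metric.mem_ball.1 hyt).le
    simp only [mem_iInter, mem_setOf_eq] at hxT hx'T
    have hXx : x ∈ Xn n := interior_subset hxI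
    have hXx' : x' ∈ Xn n := interior_subset hx'I
    simp only [hXn, mem_iInter, mem_setOf_eq] at hXx hXx'
    have e1 : |E x y - E x t| ≤ ε / 8 := hXx y t hyt'
    have e2 : |E x t - E x0 t| < ε / 8 := hxT t hts
    have e3 : |E x' t - E x0 t| < ε / 8 := hx'T t hts
    have e4 : |E x' y - E x' t| ≤ ε / 8 := hXx' y t hyt'
    have : E x y - E x' y =
        (E x y - E x t) + (E x t - E x0 t) + (E x0 t - E x' t) + (E x' t - E x' y) := by ring
    rw [this]
    have h3' : |E x0 t - E x' t| < ε / 8 := by rwa [abs_sub_comm] at e3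
    have h4' : |E x' t - E x' y| ≤ ε / 8 := by rwa [abs_sub_comm] at e4
    calc |E x y - E x t + (E x t - E x0 t) + (E x0 t - E x' t) + (E x' t - E x' y)|
        ≤ |E x y - E x t| + |E x t - E x0 t| + |E x0 t - E x' t| + |E x' t - E x' y| := by
          exact (abs_add_le _ _).trans (by
            have := abs_add_le (E x y - E x t + (E x t - E x0 t)) (E x0 t - E x' t)
            have h2 := abs_add_le (E x y - E x t) (E x t - E x0 t)
            linarith [abs_add_le (E x y - E x t + (E x t - E x0 t) + (E x0 t - E x' t)) (E x' t - E x' y)])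
      _ ≤ ε := by linarith


section EllisAux

variable {G : Type*} [Group G] [TopologicalSpace G]

/-- A splitting witness column for an open set `A` of functions: a point where some
pair from `A ∩ K` is `ε`-far apart. -/
noncomputable def ellisWit (K : Set (G → ℝ)) (ε : ℝ) (A : Set (G → ℝ)) : G := by
  classical
  exact if h : ∃ y : G, ∃ g ∈ A ∩ K, ∃ h' ∈ A ∩ K, |g y - h' y| > ε then h.choose else 1

lemma ellisWit_spec {K : Set (G → ℝ)} {ε : ℝ} {A : Set (G → ℝ)}
    (h : ∃ y : G, ∃ g ∈ A ∩ K, ∃ h' ∈ A ∩ K, |g y - h' y| > ε) :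
    ∃ g ∈ A ∩ K, ∃ h' ∈ A ∩ K, |g (ellisWit K ε A) - h' (ellisWit K ε A)| > ε := by
  classical
  rw [ellisWit, dif_pos h]
  exact h.choose_spec

/-- Stages of saturation columns. -/
noncomputable def ellisCols (K : Set (G → ℝ)) (ε : ℝ) (σ : ℕ → Set (ℕ → ℝ)) : ℕ → ℕ → G
  | 0 => fun _ => 1
  | (n + 1) => fun m =>
      if (Nat.unpair m).1 = 0 then ellisCols K ε σ n (Nat.unpair m).2
      else ellisWit K ε
        ((fun g : G → ℝ => fun i : ℕ => g (ellisCols K ε σ n i)) ⁻¹' σ (Nat.unpair m).2)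

lemma ellisCols_succ_left (K : Set (G → ℝ)) (ε : ℝ) (σ : ℕ → Set (ℕ → ℝ)) (n j : ℕ) :
    ellisCols K ε σ (n + 1) (Nat.pair 0 j) = ellisCols K ε σ n j := by
  simp [ellisCols, Nat.unpair_pair]

lemma ellisCols_succ_wit (K : Set (G → ℝ)) (ε : ℝ) (σ : ℕ → Set (ℕ → ℝ)) (n k : ℕ) :
    ellisCols K ε σ (n + 1) (Nat.pair 1 k) = ellisWit K ε
      ((fun g : G → ℝ => fun i : ℕ => g (ellisCols K ε σ n i)) ⁻¹' σ k) := by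
  simp [ellisCols, Nat.unpair_pair]

lemma ellisCols_le (K : Set (G → ℝ)) (ε : ℝ) (σ : ℕ → Set (ℕ → ℝ)) :
    ∀ {n N : ℕ}, n ≤ N → ∀ j, ∃ j', ellisCols K ε σ N j' = ellisCols K ε σ n j := by
  intro n N h
  induction h with
  | refl => exact fun j => ⟨j, rfl⟩
  | step h ih =>
      rename_i N' _
      intro j
      obtain ⟨j', hj'⟩ := ih j
      exact ⟨Nat.pair 0 j', by rw [ellisCols_succ_left]; exact hj'⟩

end EllisAux

set_option maxHeartbeats 1000000 in
set_option synthInstance.maxHeartbeats 200000 in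
/-- Core oscillation lemma (Namioka-type) for a compact Hausdorff semitopological
group: for every continuous real function and every `ε > 0` there is a nonempty
open set on which the right-translate family has oscillation at most `ε`. -/
theorem ellis_core {G : Type*} [Group G] [TopologicalSpace G] [CompactSpace G] [T2Space G]
    (hleft : ∀ a : G, Continuous fun x : G => a * x)
    (hright : ∀ a : G, Continuous fun x : G => x * a)
    (f : G → ℝ) (hf : Continuous f) {ε : ℝ} (hε : 0 < ε) :
    ∃ U : Set G, IsOpen U ∧ U.Nonempty ∧
      ∀ x ∈ U, ∀ x' ∈ U, ∀ y : G, |f (x * y) - f (x' * y)| ≤ ε := by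
  by_contra hCL
  push_neg at hCL
  -- the translate family
  set Φ : G → (G → ℝ) := fun x => fun y => f (x * y) with hΦ
  have hΦc : Continuous Φ := continuous_pi fun y => hf.comp (hright y)
  set K : Set (G → ℝ) := Set.range Φ with hK
  have hKc : IsCompact K := isCompact_range hΦc
  have hKcont : ∀ g ∈ K, Continuous g := by
    rintro g ⟨x, rfl⟩
    exact hf.comp (hleft x)
  -- splitting property from the contradiction hypothesis
  have hsplit : ∀ A : Set (G → ℝ), IsOpen A → (A ∩ K).Nonempty →
      ∃ y : G, ∃ g ∈ A ∩ K, ∃ h' ∈ A ∩ K, |g y - h' y| > ε := by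
    rintro A hA ⟨g0, hg0A, x0, rfl⟩
    obtain ⟨x, hx, x', hx', y, hy⟩ := hCL (Φ ⁻¹' A) (hA.preimage hΦc) ⟨x0, hg0A⟩
    exact ⟨y, Φ x, ⟨hx, mem_range_self x⟩, Φ x', ⟨hx', mem_range_self x'⟩, hy⟩
  -- a countable basis of ℝ^ℕ
  obtain ⟨B, hBc, -, hB⟩ := TopologicalSpace.exists_countable_basis (ℕ → ℝ)
  have hBne : B.Nonempty := by
    rcases Set.eq_empty_or_nonempty B with h | h
    · exfalso
      have h2 := hB.sUnion_eq
      rw [h] at h2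
      simp only [sUnion_empty] at h2
      exact (notMem_empty (fun _ : ℕ => (0:ℝ))) (h2 ▸ mem_univ _)
    · exact h
  obtain ⟨σ, hσ⟩ := hBc.exists_eq_range hBne
  -- the saturated countable column family
  set cols : ℕ → ℕ → G := ellisCols K ε σ with hcols
  set Dinf : ℕ → G := fun m => cols (Nat.unpair m).1 (Nat.unpair m).2 with hDinf
  set Dcl : Set G := closure (Set.range Dinf) with hDcl
  have hDinf_stage : ∀ n j, ∃ m, Dinf m = cols n j := fun n j =>
    ⟨Nat.pair n j, by simp [hDinf, Nat.unpair_pair]⟩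
  -- the restricted (metrizable) family
  set res : (G → ℝ) → (ℕ → ℝ) := fun g i => g (Dinf i) with hres
  have hresc : Continuous res := continuous_pi fun i => continuous_apply (Dinf i)
  set KD : Set (ℕ → ℝ) := res '' K with hKD
  have hKDc : IsCompact KD := hKc.image hresc
  -- a total section of the restriction map
  have hSex : ∀ u : ℕ → ℝ, ∃ g : G → ℝ, u ∈ KD → g ∈ K ∧ res g = u := by
    intro u
    by_cases hu : u ∈ KD
    · rcases hu with ⟨g, hg, hgu⟩
      exact ⟨g, fun _ => ⟨hg, hgu⟩⟩
    · exact ⟨0, fun h => absurd h hu⟩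
  choose S hS using hSex
  -- extension uniqueness on the closure of the columns
  have hEXT : ∀ g ∈ K, ∀ h' ∈ K, res g = res h' → ∀ y ∈ Dcl, g y = h' y := by
    intro g hg h' hh' hgh
    have heq : Set.EqOn g h' (Set.range Dinf) := by
      rintro y ⟨i, rfl⟩
      exact congrFun hgh i
    exact fun y hy => heq.closure (hKcont g hg) (hKcont h' hh') hy
  -- subtype instances
  haveI hKDcs : CompactSpace ↥KD := isCompact_iff_compactSpace.mp hKDc
  haveI hKcs : CompactSpace ↥K := isCompact_iff_compactSpace.mp hKc
  haveI : Nonempty ↥KD := ⟨⟨res (Φ 1), mem_image_of_mem _ (mem_range_self 1)⟩⟩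
  -- the quotient map from K onto KD
  set resS : ↥K → ↥KD := fun g => ⟨res g.1, mem_image_of_mem _ g.2⟩ with hresS
  have hresSc : Continuous resS :=
    Continuous.subtype_mk (hresc.comp continuous_subtype_val) _
  have hresSsurj : Surjective resS := by
    rintro ⟨u, g, hg, rfl⟩
    exact ⟨⟨g, hg⟩, rfl⟩
  have hq : IsQuotientMap resS := (hresSc.isClosedMap).isQuotientMap hresSc hresSsurj
  -- the dual family of evaluation functionals
  set T : G → (↥KD → ℝ) := fun y u => S u.1 y with hT
  have hTc : Continuous T := continuous_pi fun u => hKcont _ (hS u.1 u.2).1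
  have hTcont : ∀ y ∈ Dcl, Continuous (T y) := by
    intro y hy
    refine hq.continuous_iff.mpr ?_
    have hcomp : (T y) ∘ resS = fun g : ↥K => g.1 y := by
      funext g
      have h1 := hS (res g.1) (mem_image_of_mem _ g.2)
      exact hEXT _ h1.1 _ g.2 h1.2 y hy
    rw [hcomp]
    exact (continuous_apply y).comp continuous_subtype_val
  set Ahat : Set (↥KD → ℝ) := T '' Dcl with hAhat
  have hAhatc : IsCompact Ahat := (isClosed_closure.isCompact).image hTc
  haveI : CompactSpace ↥Ahat := isCompact_iff_compactSpace.mp hAhatc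
  haveI : Nonempty ↥Ahat :=
    ⟨⟨T (Dinf 0), mem_image_of_mem _ (subset_closure (mem_range_self 0))⟩⟩
  -- metrizability of the dual
  have hqd : DenseRange (TopologicalSpace.denseSeq ↥KD) := TopologicalSpace.denseRange_denseSeq ↥KD
  set ι : ↥Ahat → (ℕ → ℝ) := fun φ => fun k => φ.1 (TopologicalSpace.denseSeq ↥KD k) with hι
  have hιc : Continuous ι :=
    continuous_pi fun k => (continuous_apply _).comp continuous_subtype_val
  have hιinj : Function.Injective ι := by
    rintro ⟨φ, yφ, hyφ, rfl⟩ ⟨ψ, yψ, hyψ, rfl⟩ hιeq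
    refine Subtype.ext ?_
    refine Continuous.ext_on hqd (hTcont yφ hyφ) (hTcont yψ hyψ) ?_
    rintro u ⟨k, rfl⟩
    exact congrFun hιeq k
  haveI : SecondCountableTopology ↥Ahat :=
    (hιc.isClosedEmbedding hιinj).toIsEmbedding.secondCountableTopology
  haveI : TopologicalSpace.MetrizableSpace ↥Ahat :=
    TopologicalSpace.metrizableSpace_of_t3_secondCountable ↥Ahat
  letI : MetricSpace ↥Ahat := TopologicalSpace.metrizableSpaceMetric ↥Ahat
  -- apply the metric core lemma
  obtain ⟨U, hUo, ⟨u0, hu0⟩, hU⟩ := ellis_metric_core (X := ↥KD) (Y := ↥Ahat)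
    (fun u φ => φ.1 u)
    (fun u => (continuous_apply u).comp continuous_subtype_val)
    (by rintro ⟨φ, y, hy, rfl⟩; exact hTcont y hy) hε
  -- translate the open set back to ℝ^ℕ
  obtain ⟨O, hOo, hOU⟩ := isOpen_induced_iff.mp hUo
  have hu0O : (u0 : ℕ → ℝ) ∈ O := by
    have : u0 ∈ Subtype.val ⁻¹' O := hOU ▸ hu0
    exact this
  obtain ⟨I, V, hIV, hVsub⟩ := isOpen_pi_iff.mp hOo u0.1 hu0O
  -- common stage for the finitely many coordinates
  set N : ℕ := I.sup fun i => (Nat.unpair i).1 with hN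
  have htrans : ∀ i : ℕ, ∃ j', i ∈ I → cols N j' = Dinf i := by
    intro i
    by_cases hi : i ∈ I
    · obtain ⟨j', hj'⟩ := ellisCols_le K ε σ
        (Finset.le_sup (f := fun i => (Nat.unpair i).1) hi) (Nat.unpair i).2
      exact ⟨j', fun _ => hj'⟩
    · exact ⟨0, fun h => absurd h hi⟩
  choose t ht using htrans
  -- the point g0 = S u0 at stage N
  have hg0 := hS u0.1 u0.2
  set g0 : G → ℝ := S u0.1 with hg0def
  set resN : (G → ℝ) → (ℕ → ℝ) := fun g i => g (cols N i) with hresN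
  have hresNc : Continuous resN := continuous_pi fun i => continuous_apply (cols N i)
  set O' : Set (ℕ → ℝ) := {w | ∀ i ∈ I, w (t i) ∈ V i} with hO'
  have hO'o : IsOpen O' := by
    have : O' = ⋂ i ∈ I, (fun w : ℕ → ℝ => w (t i)) ⁻¹' (V i) := by
      ext w
      simp [hO']
    rw [this]
    exact isOpen_biInter_finset fun i hi => ((hIV i hi).1).preimage (continuous_apply (t i))
  have hpO' : resN g0 ∈ O' := by
    intro i hi
    have : g0 (cols N (t i)) = g0 (Dinf i) := by rw [ht i hi]
    simp only [hresN]
    rw [this]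
    have : g0 (Dinf i) = u0.1 i := congrFun hg0.2 i
    rw [this]
    exact (hIV i hi).2
  -- find a basis element between the point and O'
  obtain ⟨b, hbB, hpb, hbO'⟩ := hB.exists_subset_of_mem_open hpO' hO'o
  have hbrange : b ∈ Set.range σ := hσ ▸ hbB
  obtain ⟨k, hk⟩ := hbrange
  -- the splitting witness for this stage/basis element
  set A : Set (G → ℝ) := resN ⁻¹' σ k with hA
  have hAo : IsOpen A := (hB.isOpen (hσ ▸ (mem_range_self k : σ k ∈ Set.range σ))).preimage hresNc
  have hAK : (A ∩ K).Nonempty := ⟨g0, by rw [hA, mem_preimage, hk]; exact hpb, hg0.1⟩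
  obtain ⟨g, ⟨hgA, hgK⟩, h', ⟨hh'A, hh'K⟩, hfar⟩ := ellisWit_spec (hsplit A hAo hAK)
  -- the witness column is one of the columns
  set y0 : G := ellisWit K ε A with hy0
  have hy0col : y0 = cols (N + 1) (Nat.pair 1 k) := by
    rw [hy0, hcols, ellisCols_succ_wit, hA, hk]
  have hy0Dinf : ∃ m, Dinf m = y0 := by
    obtain ⟨m, hm⟩ := hDinf_stage (N + 1) (Nat.pair 1 k)
    exact ⟨m, by rw [hm, hy0col]⟩
  obtain ⟨m0, hm0⟩ := hy0Dinf
  have hy0Dcl : y0 ∈ Dcl := hm0 ▸ subset_closure (mem_range_self m0)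
  -- both restricted witnesses lie in U
  have hmemU : ∀ g' : G → ℝ, g' ∈ A → g' ∈ K → ∃ hu : res g' ∈ KD, (⟨res g', hu⟩ : ↥KD) ∈ U := by
    intro g' hg'A hg'K
    refine ⟨mem_image_of_mem _ hg'K, ?_⟩
    rw [← hOU]
    have hO'mem : resN g' ∈ O' := hbO' (by rw [hA, mem_preimage, hk] at hg'A; exact hk ▸ hg'A)
    have : res g' ∈ (I : Set ℕ).pi V := by
      intro i hi
      have h1 : res g' i = g' (Dinf i) := rfl
      have h2 : g' (Dinf i) = g' (cols N (t i)) := by rw [ht i hi]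
      rw [h1, h2]
      exact hO'mem i hi
    exact hVsub this
  obtain ⟨hugKD, hugU⟩ := hmemU g hgA hgK
  obtain ⟨huhKD, huhU⟩ := hmemU h' hh'A hh'K
  -- evaluate the dual functional at the witness column
  set φ0 : ↥Ahat := ⟨T y0, mem_image_of_mem _ hy0Dcl⟩ with hφ0
  have hclose := hU _ hugU _ huhU φ0
  have hev : ∀ g' : G → ℝ, g' ∈ K → ∀ hu : res g' ∈ KD,
      φ0.1 (⟨res g', hu⟩ : ↥KD) = g' y0 := by
    intro g' hg'K hu
    have h1 := hS (res g') hu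
    exact hEXT _ h1.1 _ hg'K h1.2 y0 hy0Dcl
  rw [hev g hgK hugKD, hev h' hh'K huhKD] at hclose
  exact absurd hclose (not_le.mpr hfar)

/-- **Ellis' theorem.** A group with a compact Hausdorff topology in which
multiplication is separately continuous is a topological group: multiplication is
jointly continuous and inversion is continuous. -/
theorem ellis_theorem
    {G : Type*} [Group G] [TopologicalSpace G] [CompactSpace G] [T2Space G]
    (hleft : ∀ a : G, Continuous fun x : G => a * x)
    (hright : ∀ a : G, Continuous fun x : G => x * a) :
    Continuous (fun p : G × G => p.1 * p.2) ∧ Continuous (fun x : G => x⁻¹) := by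
  -- local uniform oscillation control around every point
  have hosc : ∀ (f : G → ℝ), Continuous f → ∀ ε : ℝ, 0 < ε → ∀ a : G,
      ∃ U : Set G, IsOpen U ∧ a ∈ U ∧ ∀ x ∈ U, ∀ y : G, |f (x * y) - f (a * y)| ≤ ε := by
    intro f hf ε hε a
    obtain ⟨U0, hU0o, ⟨x0, hx0⟩, hU0⟩ := ellis_core hleft hright f hf hε
    set c : G := x0⁻¹ * a with hc
    have hac : a * c⁻¹ = x0 := by rw [hc]; group
    refine ⟨(fun x : G => x * c⁻¹) ⁻¹' U0, hU0o.preimage (hright c⁻¹), ?_, ?_⟩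
    · show a * c⁻¹ ∈ U0
      rwa [hac]
    · intro x hx y
      have h1 := hU0 _ hx _ (show a * c⁻¹ ∈ U0 by rwa [hac]) (c * y)
      have e1 : x * c⁻¹ * (c * y) = x * y := by group
      have e2 : a * c⁻¹ * (c * y) = a * y := by group
      rwa [e1, e2] at h1
  -- joint continuity of f ∘ mul for every continuous real f
  have hjoint : ∀ (f : G → ℝ), Continuous f → Continuous fun p : G × G => f (p.1 * p.2) := by
    intro f hf
    rw [continuous_iff_continuousAt]
    rintro ⟨a, b⟩
    rw [ContinuousAt, Metric.tendsto_nhds]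
    intro ε hε
    obtain ⟨U, hUo, haU, hU⟩ := hosc f hf (ε / 3) (by positivity) a
    set V : Set G := (fun y => f (a * y)) ⁻¹' Metric.ball (f (a * b)) (ε / 3) with hV
    have hVo : IsOpen V := Metric.isOpen_ball.preimage (hf.comp (hleft a))
    have hbV : b ∈ V := by
      simp only [hV, mem_preimage, Metric.mem_ball, dist_self]
      positivity
    have hmem : U ×ˢ V ∈ nhds (a, b) := prod_mem_nhds (hUo.mem_nhds haU) (hVo.mem_nhds hbV)
    filter_upwards [hmem]
    rintro ⟨x, y⟩ ⟨hxU, hyV⟩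
    have h1 : |f (x * y) - f (a * y)| ≤ ε / 3 := hU x hxU y
    have h2 : |f (a * y) - f (a * b)| < ε / 3 := by
      have := hyV
      simp only [hV, mem_preimage, Metric.mem_ball, Real.dist_eq] at this
      exact this
    rw [Real.dist_eq]
    calc |f (x * y) - f (a * b)|
        ≤ |f (x * y) - f (a * y)| + |f (a * y) - f (a * b)| := abs_sub_le _ _ _
      _ < ε := by linarith
  -- continuity of multiplication, via Urysohn's lemma
  have hmul : Continuous fun p : G × G => p.1 * p.2 := by
    rw [continuous_iff_continuousAt]
    rintro ⟨a, b⟩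
    rw [ContinuousAt, (nhds_basis_opens (a * b)).tendsto_right_iff]
    rintro W ⟨hWab, hWo⟩
    have hdisj : Disjoint (Wᶜ) ({a * b} : Set G) := by
      rw [Set.disjoint_right]
      intro p hp
      rw [mem_singleton_iff] at hp
      subst hp
      exact fun h => h hWab
    obtain ⟨φ, hφ0, hφ1, -⟩ := exists_continuous_zero_one_of_isClosed
      (isClosed_compl_iff.mpr hWo) isClosed_singleton hdisj
    have hopen : IsOpen {p : G × G | 1 / 2 < φ (p.1 * p.2)} :=
      isOpen_lt continuous_const (hjoint _ φ.continuous)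
    have hmemab : (a, b) ∈ {p : G × G | 1 / 2 < φ (p.1 * p.2)} := by
      have h1 : φ (a * b) = 1 := by
        have := hφ1 (mem_singleton (a * b))
        simpa using this
      simp only [mem_setOf_eq, h1]
      norm_num
    filter_upwards [hopen.mem_nhds hmemab] with p hp
    by_contra hpW
    have h0 : φ (p.1 * p.2) = 0 := by
      have := hφ0 (hpW : p.1 * p.2 ∈ Wᶜ)
      simpa using this
    rw [h0] at hp
    norm_num at hp
  -- continuity of inversion, via the closed graph
  have hinv : Continuous fun x : G => x⁻¹ := by
    rw [continuous_iff_isClosed]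
    intro C hC
    have heq : (fun x : G => x⁻¹) ⁻¹' C
        = Prod.fst '' ((fun p : G × G => p.1 * p.2) ⁻¹' {1} ∩ (Set.univ ×ˢ C)) := by
      ext x
      constructor
      · intro hx
        exact ⟨(x, x⁻¹), ⟨by simp, ⟨trivial, hx⟩⟩, rfl⟩
      · rintro ⟨⟨x', y⟩, ⟨hxy, -, hyC⟩, rfl⟩
        have hy : y = x'⁻¹ := eq_inv_of_mul_eq_one_right (by simpa using hxy)
        exact hy ▸ hyC
    rw [heq]
    have hclosed : IsClosed ((fun p : G × G => p.1 * p.2) ⁻¹' {1} ∩ (Set.univ ×ˢ C)) :=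
      (isClosed_singleton.preimage hmul).inter (isClosed_univ.prod hC)
    exact (hclosed.isCompact.image continuous_fst).isClosed
  exact ⟨hmul, hinv⟩
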